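/- Let a ∈ ℝ \ {0,1} and â, ĉ₀, ĉ₁, f̂, ĥ₀, ĥ₁ ∈ ℝ. Set g₀ = ĉ₀, f₀ = −ĥ₀, g₁ = ĉ₁, f₁ = −ĥ₁, g₂ = f₂ = 0, g₃ = â − ĉ₀ − ĉ₁, f₃ = ĥ₀ + ĥ₁ − f̂, g₄ = −a·g₃, f₄ = −a·f₃, and define R(t) = g₀(t−1)²(t−a)² + g₁t²(t−a)² + g₂t²(t−1)² + g₃t²(t−1)(t−a) + g₄t(t−1)(t−a), S(t) = f₀(t−1)²(t−a)² + f₁t²(t−a)² + f₂t²(t−1)² + f₃t²(t−1)(t−a) + f₄t(t−1)(t−a), and H(t) = ât² + (ĉ₁−ĉ₀−â)t + ĉ₀. Then R(t) = (t−a)²·H(t) and S(t) = −(t−a)²·(f̂t² + (ĥ₁−ĥ₀−f̂)t + ĥ₀) for all t ∈ ℝ, and moreover, with G(t) = 3t² − 2(a+1)t + a and Δ = (â−ĉ₀−ĉ₁)² − 4ĉ₀ĉ₁, for every real y ∉ {0,1,a} with H(y) ≠ 0: (y²(y−1)²(y−a)²/R(y)²)·[ R''(y) + (G(y)R'(y)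 − 2R(y)G'(y))/(y(y−1)(y−a)) + R(y)G(y)²/(y²(y−1)²(y−a)²) − (5/4)·R'(y)²/R(y) ] − S(y)/R(y) = (y²(1−y)²/H(y)²)·[ â + (â + (ĉ₁−ĉ₀)(2y−1))/(y(y−1)) − (5/4)·Δ/H(y) ] + (f̂·y(y−1) + ĥ₀(1−y) + ĥ₁y + 1)/H(y). -/

import Mathlib

set_option maxHeartbeats 1000000

/-- The numerator polynomial `R` of the Heun-class Bose invariant. -/
def heunR (a g₀ g₁ g₂ g₃ g₄ : ℝ) : ℝ → ℝ := fun t =>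
  g₀ * (t - 1) ^ 2 * (t - a) ^ 2 + g₁ * t ^ 2 * (t - a) ^ 2 + g₂ * t ^ 2 * (t - 1) ^ 2
    + g₃ * t ^ 2 * (t - 1) * (t - a) + g₄ * t * (t - 1) * (t - a)

/-- The polynomial `S` of the Heun-class Bose invariant. -/
def heunS (a f₀ f₁ f₂ f₃ f₄ : ℝ) : ℝ → ℝ := fun t =>
  f₀ * (t - 1) ^ 2 * (t - a) ^ 2 + f₁ * t ^ 2 * (t - a) ^ 2 + f₂ * t ^ 2 * (t - 1) ^ 2
    + f₃ * t ^ 2 * (t - 1) * (t - a) + f₄ * t * (t - 1) * (t - a)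

/-- `G(t) = 3t² − 2(a+1)t + a`. -/
def heunG (a : ℝ) : ℝ → ℝ := fun t => 3 * t ^ 2 - 2 * (a + 1) * t + a

/-- Natanzon's quadratic `H(t) = ât² + (ĉ₁−ĉ₀−â)t + ĉ₀`. -/
def natanzonH (ah c₀ c₁ : ℝ) : ℝ → ℝ := fun t => ah * t ^ 2 + (c₁ - c₀ - ah) * t + c₀

private lemma quarticDeriv (c0 c1 c2 c3 c4 t : ℝ) :
    HasDerivAt (fun t : ℝ => c4 * t ^ 4 + c3 * t ^ 3 + c2 * t ^ 2 + c1 * t + c0)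
      (4 * c4 * t ^ 3 + 3 * c3 * t ^ 2 + 2 * c2 * t + c1) t := by
  have h4 : HasDerivAt (fun t : ℝ => t ^ 4) (4 * t ^ 3) t := by
    simpa using hasDerivAt_pow 4 t
  have h3 : HasDerivAt (fun t : ℝ => t ^ 3) (3 * t ^ 2) t := by
    simpa using hasDerivAt_pow 3 t
  have h2 : HasDerivAt (fun t : ℝ => t ^ 2) (2 * t) t := by
    simpa using hasDerivAt_pow 2 t
  have h1 : HasDerivAt (fun t : ℝ => t) 1 t := hasDerivAt_id t
  have := ((((h4.const_mul c4).add (h3.const_mul c3)).add (h2.const_mul c2)).add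
      (h1.const_mul c1)).add_const c0
  rw [show 4 * c4 * t ^ 3 + 3 * c3 * t ^ 2 + 2 * c2 * t + c1
      = c4 * (4 * t ^ 3) + c3 * (3 * t ^ 2) + c2 * (2 * t) + c1 * 1 by ring]
  exact this

private lemma quarticDerivEq (c0 c1 c2 c3 c4 : ℝ) :
    deriv (fun t : ℝ => c4 * t ^ 4 + c3 * t ^ 3 + c2 * t ^ 2 + c1 * t + c0)
      = fun t => 4 * c4 * t ^ 3 + 3 * c3 * t ^ 2 + 2 * c2 * t + c1 :=
  funext fun t => (quarticDeriv c0 c1 c2 c3 c4 t).deriv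

private lemma natanzon_reduction (y a ah c₀ c₁ fh hh₀ hh₁ D2 D1 DG Ry Sy Gy Hy : ℝ)
    (hy0 : y ≠ 0) (hy1 : y - 1 ≠ 0) (hb : y - a ≠ 0) (hH : Hy ≠ 0)
    (hHy : Hy = ah * y ^ 2 + (c₁ - c₀ - ah) * y + c₀)
    (hRy : Ry = (y - a) ^ 2 * Hy)
    (hSy : Sy = -((y - a) ^ 2 * (fh * y ^ 2 + (hh₁ - hh₀ - fh) * y + hh₀)))
    (hGy : Gy = y * (y - 1) + (y - a) * (2 * y - 1))
    (hD2 : D2 = 2 * Hy + 4 * (y - a) * (2 * ah * y + (c₁ - c₀ - ah)) + 2 * ah * (y - a) ^ 2)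
    (hD1 : D1 = (y - a) * (2 * Hy + (y - a) * (2 * ah * y + (c₁ - c₀ - ah))))
    (hDG : DG = 2 * (2 * y - 1) + 2 * (y - a)) :
    (y ^ 2 * (y - 1) ^ 2 * (y - a) ^ 2 / Ry ^ 2) *
          (D2 + (Gy * D1 - 2 * Ry * DG) / (y * (y - 1) * (y - a))
            + Ry * Gy ^ 2 / (y ^ 2 * (y - 1) ^ 2 * (y - a) ^ 2)
            - (5 / 4) * D1 ^ 2 / Ry)
        - Sy / Ry
      = (y ^ 2 * (1 - y) ^ 2 / Hy ^ 2) *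
          (ah + (ah + (c₁ - c₀) * (2 * y - 1)) / (y * (y - 1))
            - (5 / 4) * ((ah - c₀ - c₁) ^ 2 - 4 * c₀ * c₁) / Hy)
        + (fh * y * (y - 1) + hh₀ * (1 - y) + hh₁ * y + 1) / Hy := by
  subst hRy hSy hGy hD2 hD1 hDG
  have step1 : (y ^ 2 * (y - 1) ^ 2 * (y - a) ^ 2 / ((y - a) ^ 2 * Hy) ^ 2) *
          ((2 * Hy + 4 * (y - a) * (2 * ah * y + (c₁ - c₀ - ah)) + 2 * ah * (y - a) ^ 2)
            + ((y * (y - 1) + (y - a) * (2 * y - 1))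
                  * ((y - a) * (2 * Hy + (y - a) * (2 * ah * y + (c₁ - c₀ - ah))))
                - 2 * ((y - a) ^ 2 * Hy) * (2 * (2 * y - 1) + 2 * (y - a)))
              / (y * (y - 1) * (y - a))
            + ((y - a) ^ 2 * Hy) * (y * (y - 1) + (y - a) * (2 * y - 1)) ^ 2
              / (y ^ 2 * (y - 1) ^ 2 * (y - a) ^ 2)
            - (5 / 4) * ((y - a) * (2 * Hy + (y - a) * (2 * ah * y + (c₁ - c₀ - ah)))) ^ 2
              / ((y - a) ^ 2 * Hy))
        - (-((y - a) ^ 2 * (fh * y ^ 2 + (hh₁ - hh₀ - fh) * y + hh₀))) / ((y - a) ^ 2 * Hy)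
      = (2 * ah * (y * (y - 1)) ^ 2 * Hy
          + (y * (y - 1)) * (2 * y - 1) * Hy * (2 * ah * y + (c₁ - c₀ - ah))
          - 4 * (y * (y - 1)) * Hy ^ 2 + (2 * y - 1) ^ 2 * Hy ^ 2
          - (5 / 4) * (y * (y - 1)) ^ 2 * (2 * ah * y + (c₁ - c₀ - ah)) ^ 2) / Hy ^ 3
        + (fh * y * (y - 1) + hh₀ * (1 - y) + hh₁ * y) / Hy := by
    field_simp
    ring
  have step2 : (y ^ 2 * (1 - y) ^ 2 / Hy ^ 2) *
          (ah + (ah + (c₁ - c₀) * (2 * y - 1)) / (y * (y - 1))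
            - (5 / 4) * ((ah - c₀ - c₁) ^ 2 - 4 * c₀ * c₁) / Hy)
        + (fh * y * (y - 1) + hh₀ * (1 - y) + hh₁ * y + 1) / Hy
      = (ah * (y * (y - 1)) ^ 2 * Hy
          + (y * (y - 1)) * (ah + (c₁ - c₀) * (2 * y - 1)) * Hy
          - (5 / 4) * (y * (y - 1)) ^ 2 * ((ah - c₀ - c₁) ^ 2 - 4 * c₀ * c₁)
          + Hy ^ 2) / Hy ^ 3
        + (fh * y * (y - 1) + hh₀ * (1 - y) + hh₁ * y) / Hy := by
    field_simp
    ring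
  rw [step1, step2]
  have hW : (2 * ah * (y * (y - 1)) ^ 2 * Hy
          + (y * (y - 1)) * (2 * y - 1) * Hy * (2 * ah * y + (c₁ - c₀ - ah))
          - 4 * (y * (y - 1)) * Hy ^ 2 + (2 * y - 1) ^ 2 * Hy ^ 2
          - (5 / 4) * (y * (y - 1)) ^ 2 * (2 * ah * y + (c₁ - c₀ - ah)) ^ 2)
      = (ah * (y * (y - 1)) ^ 2 * Hy
          + (y * (y - 1)) * (ah + (c₁ - c₀) * (2 * y - 1)) * Hy
          - (5 / 4) * (y * (y - 1)) ^ 2 * ((ah - c₀ - c₁) ^ 2 - 4 * c₀ * c₁)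
          + Hy ^ 2) := by
    linear_combination (5 * ah * y ^ 2 * (y - 1) ^ 2) * hHy
  rw [hW]

/-- Natanzon's class of potentials is a subclass of the Heun-class
potentials under the stated substitution of parameters. -/
theorem stmt_14 (a : ℝ) (ha0 : a ≠ 0) (ha1 : a ≠ 1)
    (ah ch₀ ch₁ fh hh₀ hh₁ : ℝ)
    (g₀ g₁ g₂ g₃ g₄ f₀ f₁ f₂ f₃ f₄ : ℝ)
    (hg₀ : g₀ = ch₀) (hf₀ : f₀ = -hh₀) (hg₁ : g₁ = ch₁) (hf₁ : f₁ = -hh₁)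
    (hg₂ : g₂ = 0) (hf₂ : f₂ = 0) (hg₃ : g₃ = ah - ch₀ - ch₁)
    (hf₃ : f₃ = hh₀ + hh₁ - fh) (hg₄ : g₄ = -a * g₃) (hf₄ : f₄ = -a * f₃) :
    (∀ t : ℝ, heunR a g₀ g₁ g₂ g₃ g₄ t = (t - a) ^ 2 * natanzonH ah ch₀ ch₁ t) ∧
    (∀ t : ℝ, heunS a f₀ f₁ f₂ f₃ f₄ t
      = -((t - a) ^ 2 * (fh * t ^ 2 + (hh₁ - hh₀ - fh) * t + hh₀))) ∧
    ∀ y : ℝ, y ≠ 0 → y ≠ 1 → y ≠ a → natanzonH ah ch₀ ch₁ y ≠ 0 →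
      (y ^ 2 * (y - 1) ^ 2 * (y - a) ^ 2 / (heunR a g₀ g₁ g₂ g₃ g₄ y) ^ 2) *
            (deriv (deriv (heunR a g₀ g₁ g₂ g₃ g₄)) y
              + (heunG a y * deriv (heunR a g₀ g₁ g₂ g₃ g₄) y
                  - 2 * heunR a g₀ g₁ g₂ g₃ g₄ y * deriv (heunG a) y)
                / (y * (y - 1) * (y - a))
              + heunR a g₀ g₁ g₂ g₃ g₄ y * (heunG a y) ^ 2
                / (y ^ 2 * (y - 1) ^ 2 * (y - a) ^ 2)
              - (5 / 4) * (deriv (heunR a g₀ g₁ g₂ g₃ g₄) y) ^ 2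
                / heunR a g₀ g₁ g₂ g₃ g₄ y)
          - heunS a f₀ f₁ f₂ f₃ f₄ y / heunR a g₀ g₁ g₂ g₃ g₄ y
        = (y ^ 2 * (1 - y) ^ 2 / (natanzonH ah ch₀ ch₁ y) ^ 2) *
            (ah + (ah + (ch₁ - ch₀) * (2 * y - 1)) / (y * (y - 1))
              - (5 / 4) * ((ah - ch₀ - ch₁) ^ 2 - 4 * ch₀ * ch₁) / natanzonH ah ch₀ ch₁ y)
          + (fh * y * (y - 1) + hh₀ * (1 - y) + hh₁ * y + 1) / natanzonH ah ch₀ ch₁ y := by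
  subst hg₀ hg₁ hg₂ hg₃ hg₄ hf₀ hf₁ hf₂ hf₃ hf₄
  have hRfun : heunR a g₀ g₁ 0 (ah - g₀ - g₁) (-a * (ah - g₀ - g₁))
      = fun t : ℝ => (g₀ + g₁ + (ah - g₀ - g₁)) * t ^ 4
        + (-(g₀ * (2 * a + 2)) - 2 * a * g₁ - (a + 1) * (ah - g₀ - g₁)
            + (-a * (ah - g₀ - g₁))) * t ^ 3
        + (g₀ * (a ^ 2 + 4 * a + 1) + a ^ 2 * g₁ + a * (ah - g₀ - g₁)
            - (a + 1) * (-a * (ah - g₀ - g₁))) * t ^ 2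
        + (-(g₀ * (2 * a ^ 2 + 2 * a)) + a * (-a * (ah - g₀ - g₁))) * t
        + g₀ * a ^ 2 := by
    funext t; simp only [heunR]; ring
  have hGfun : heunG a = fun t : ℝ => 0 * t ^ 4 + 0 * t ^ 3 + 3 * t ^ 2
      + (-(2 * (a + 1))) * t + a := by
    funext t; simp only [heunG]; ring
  have hR1 : ∀ t : ℝ, heunR a g₀ g₁ 0 (ah - g₀ - g₁) (-a * (ah - g₀ - g₁)) t
      = (t - a) ^ 2 * natanzonH ah g₀ g₁ t := by
    intro t; simp only [heunR, natanzonH]; ring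
  have hS1 : ∀ t : ℝ, heunS a (-hh₀) (-hh₁) 0 (hh₀ + hh₁ - fh) (-a * (hh₀ + hh₁ - fh)) t
      = -((t - a) ^ 2 * (fh * t ^ 2 + (hh₁ - hh₀ - fh) * t + hh₀)) := by
    intro t; simp only [heunS]; ring
  refine ⟨hR1, hS1, ?_⟩
  intro y hy0 hy1 hya hH
  have hd1 : deriv (heunR a g₀ g₁ 0 (ah - g₀ - g₁) (-a * (ah - g₀ - g₁)))
      = fun t : ℝ => 4 * (g₀ + g₁ + (ah - g₀ - g₁)) * t ^ 3
        + 3 * (-(g₀ * (2 * a + 2)) - 2 * a * g₁ - (a + 1) * (ah - g₀ - g₁)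
            + (-a * (ah - g₀ - g₁))) * t ^ 2
        + 2 * (g₀ * (a ^ 2 + 4 * a + 1) + a ^ 2 * g₁ + a * (ah - g₀ - g₁)
            - (a + 1) * (-a * (ah - g₀ - g₁))) * t
        + (-(g₀ * (2 * a ^ 2 + 2 * a)) + a * (-a * (ah - g₀ - g₁))) := by
    rw [hRfun]; exact quarticDerivEq _ _ _ _ _
  have hd1' : (fun t : ℝ => 4 * (g₀ + g₁ + (ah - g₀ - g₁)) * t ^ 3
        + 3 * (-(g₀ * (2 * a + 2)) - 2 * a * g₁ - (a + 1) * (ah - g₀ - g₁)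
            + (-a * (ah - g₀ - g₁))) * t ^ 2
        + 2 * (g₀ * (a ^ 2 + 4 * a + 1) + a ^ 2 * g₁ + a * (ah - g₀ - g₁)
            - (a + 1) * (-a * (ah - g₀ - g₁))) * t
        + (-(g₀ * (2 * a ^ 2 + 2 * a)) + a * (-a * (ah - g₀ - g₁))))
      = fun t : ℝ => 0 * t ^ 4 + (4 * (g₀ + g₁ + (ah - g₀ - g₁))) * t ^ 3
        + (3 * (-(g₀ * (2 * a + 2)) - 2 * a * g₁ - (a + 1) * (ah - g₀ - g₁)
            + (-a * (ah - g₀ - g₁)))) * t ^ 2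
        + (2 * (g₀ * (a ^ 2 + 4 * a + 1) + a ^ 2 * g₁ + a * (ah - g₀ - g₁)
            - (a + 1) * (-a * (ah - g₀ - g₁)))) * t
        + (-(g₀ * (2 * a ^ 2 + 2 * a)) + a * (-a * (ah - g₀ - g₁))) := by
    funext t; ring
  have hd1v : deriv (heunR a g₀ g₁ 0 (ah - g₀ - g₁) (-a * (ah - g₀ - g₁))) y
      = (y - a) * (2 * natanzonH ah g₀ g₁ y + (y - a) * (2 * ah * y + (g₁ - g₀ - ah))) := by
    rw [hd1]; simp only [natanzonH]; ring
  have hd2v : deriv (deriv (heunR a g₀ g₁ 0 (ah - g₀ - g₁) (-a * (ah - g₀ - g₁)))) y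
      = 2 * natanzonH ah g₀ g₁ y + 4 * (y - a) * (2 * ah * y + (g₁ - g₀ - ah))
        + 2 * ah * (y - a) ^ 2 := by
    rw [hd1, hd1', quarticDerivEq]; simp only [natanzonH]; ring
  have hdGv : deriv (heunG a) y = 2 * (2 * y - 1) + 2 * (y - a) := by
    rw [hGfun, quarticDerivEq]; ring
  have hGv : heunG a y = y * (y - 1) + (y - a) * (2 * y - 1) := by
    simp only [heunG]; ring
  have hHv : natanzonH ah g₀ g₁ y = ah * y ^ 2 + (g₁ - g₀ - ah) * y + g₀ := rfl
  exact natanzon_reduction y a ah g₀ g₁ fh hh₀ hh₁ _ _ _ _ _ _ _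
    hy0 (sub_ne_zero.mpr hy1) (sub_ne_zero.mpr hya) hH hHv (hR1 y) (hS1 y) hGv hd2v hd1v hdGv
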